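/- (PGB necessary condition of local minima, equality case ρ = 1.) Let Q(z) = (1/m)·∑_{i=1}^m [Q_i(φ_i(z)) + R_i(ψ_i(z))], where each Q_i : ℝ^{d_φ} → ℝ and R_i : ℝ^{d_ψ} → ℝ is differentiable, convex, and nonnegative, and each φ_i and ψ_i is differentiable. Assume there exists h : ℝ^{d_z} → ℝ^{d_z} such that for all i and all z: φ_i(z) = ∑_{k=1}^{d_z} h(z)_k·∂_k φ_i(z) and ψ_i(z) = ∑_{k=1}^{d_z} h(z)_k·∂_k ψ_i(z). Then for every local minimum z of Q there exists ε₀ > 0 such that for every ε ∈ [0, ε₀), Q(z) equals the infimum, over all finite lists S of vectors in V[z,ε] and all α ∈ ℝ^{d_z × |S|}, of (1/m)·∑_{i=1}^m [Q_i(φ_i^z(α,ε,S)) + R_i(ψ_i^z(α,ε,S))]. -/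

import Mathlib

open scoped RealInnerProductSpace

noncomputable section

lemma convex_fderiv_le {E : Type*} [NormedAddCommGroup E] [NormedSpace ℝ E]
    {f : E → ℝ} (hd : Differentiable ℝ f) (hc : ConvexOn ℝ Set.univ f) (x y : E) :
    f x + fderiv ℝ f x (y - x) ≤ f y := by
  set g : ℝ → ℝ := fun t => f (x + t • (y - x)) with hg
  have hline : HasDerivAt (fun t : ℝ => x + t • (y - x)) (y - x) 0 := by
    simpa using ((hasDerivAt_id (0:ℝ)).smul_const (y - x)).const_add x
  have hgd : HasDerivAt g (fderiv ℝ f x (y - x)) 0 := by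
    have h1 : HasFDerivAt f (fderiv ℝ f x) (x + (0:ℝ) • (y - x)) := by
      simpa using (hd x).hasFDerivAt
    exact h1.comp_hasDerivAt 0 hline
  have hgc : ConvexOn ℝ Set.univ g := by
    have h2 := hc.comp_affineMap (AffineMap.lineMap x y : ℝ →ᵃ[ℝ] E)
    have : g = f ∘ (AffineMap.lineMap x y : ℝ →ᵃ[ℝ] E) := by
      funext t
      simp [hg, AffineMap.lineMap_apply_module', add_comm]
    rw [this]
    simpa using h2
  have h3 := hgc.le_slope_of_hasDerivAt (Set.mem_univ (0:ℝ)) (Set.mem_univ (1:ℝ)) one_pos hgd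
  have hs : slope g 0 1 = f y - f x := by
    simp [slope_def_field, hg]
  rw [hs] at h3
  linarith

lemma aux_crit {m dz dphi dpsi : ℕ} (hm : 0 < m)
    (Qi : Fin m → EuclideanSpace ℝ (Fin dphi) → ℝ)
    (Ri : Fin m → EuclideanSpace ℝ (Fin dpsi) → ℝ)
    (φ : Fin m → EuclideanSpace ℝ (Fin dz) → EuclideanSpace ℝ (Fin dphi))
    (ψ : Fin m → EuclideanSpace ℝ (Fin dz) → EuclideanSpace ℝ (Fin dpsi))
    (hQd : ∀ i, Differentiable ℝ (Qi i)) (hRd : ∀ i, Differentiable ℝ (Ri i))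
    (hφd : ∀ i, Differentiable ℝ (φ i)) (hψd : ∀ i, Differentiable ℝ (ψ i))
    (Q : EuclideanSpace ℝ (Fin dz) → ℝ)
    (hQ : ∀ z, Q z = (1 / (m : ℝ)) * ∑ i, (Qi i (φ i z) + Ri i (ψ i z)))
    (w : EuclideanSpace ℝ (Fin dz)) (hw : IsLocalMin Q w) (u : EuclideanSpace ℝ (Fin dz)) :
    ∑ i, (fderiv ℝ (Qi i) (φ i w) (fderiv ℝ (φ i) w u)
        + fderiv ℝ (Ri i) (ψ i w) (fderiv ℝ (ψ i) w u)) = 0 := by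
  have h1 : HasFDerivAt (fun y => ∑ i, (Qi i (φ i y) + Ri i (ψ i y)))
      (∑ i, ((fderiv ℝ (Qi i) (φ i w)).comp (fderiv ℝ (φ i) w)
        + (fderiv ℝ (Ri i) (ψ i w)).comp (fderiv ℝ (ψ i) w))) w := by
    apply HasFDerivAt.fun_sum
    intro i _
    exact (((hQd i _).hasFDerivAt.comp w (hφd i w).hasFDerivAt)).add
      (((hRd i _).hasFDerivAt.comp w (hψd i w).hasFDerivAt))
  have h2 := h1.const_mul (1 / (m:ℝ))
  have hQeq : Q = fun y => (1 / (m:ℝ)) * ∑ i, (Qi i (φ i y) + Ri i (ψ i y)) := funext hQ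
  rw [← hQeq] at h2
  have h0 := hw.hasFDerivAt_eq_zero h2
  have h3 := congrArg (fun T : EuclideanSpace ℝ (Fin dz) →L[ℝ] ℝ => T u) h0
  simp only [ContinuousLinearMap.smul_apply, ContinuousLinearMap.sum_apply,
    ContinuousLinearMap.add_apply, ContinuousLinearMap.comp_apply,
    ContinuousLinearMap.zero_apply, smul_eq_mul] at h3
  have hm' : (1 / (m:ℝ)) ≠ 0 := by positivity
  exact (mul_eq_zero.mp h3).resolve_left hm'



/-- **PGB necessary condition of local minima, equality case `ρ = 1`.**
For `Q(z) = (1/m) ∑ᵢ [Qᵢ(φᵢ(z)) + Rᵢ(ψᵢ(z))]` with `Qᵢ, Rᵢ` differentiable, convex and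
nonnegative, `φᵢ, ψᵢ` differentiable, and assuming
`φᵢ(z) = ∑ₖ h(z)ₖ ∂ₖφᵢ(z)` and `ψᵢ(z) = ∑ₖ h(z)ₖ ∂ₖψᵢ(z)` for some `h`,
every local minimum `z` of `Q` satisfies: there is `ε₀ > 0` such that for all
`ε ∈ [0, ε₀)`, `Q(z)` equals the infimum over all finite lists `S` of vectors in
`V[z,ε]` and all `α` of `(1/m) ∑ᵢ [Qᵢ(φᵢᶻ(α,ε,S)) + Rᵢ(ψᵢᶻ(α,ε,S))]`. -/
theorem pgb_necessary_condition_equality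
    (m dz dphi dpsi : ℕ) (hm : 0 < m)
    (Qi : Fin m → EuclideanSpace ℝ (Fin dphi) → ℝ)
    (Ri : Fin m → EuclideanSpace ℝ (Fin dpsi) → ℝ)
    (φ : Fin m → EuclideanSpace ℝ (Fin dz) → EuclideanSpace ℝ (Fin dphi))
    (ψ : Fin m → EuclideanSpace ℝ (Fin dz) → EuclideanSpace ℝ (Fin dpsi))
    (hQd : ∀ i, Differentiable ℝ (Qi i))
    (hQc : ∀ i, ConvexOn ℝ Set.univ (Qi i))
    (hQ0 : ∀ i q, 0 ≤ Qi i q)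
    (hRd : ∀ i, Differentiable ℝ (Ri i))
    (hRc : ∀ i, ConvexOn ℝ Set.univ (Ri i))
    (hR0 : ∀ i q, 0 ≤ Ri i q)
    (hφd : ∀ i, Differentiable ℝ (φ i))
    (hψd : ∀ i, Differentiable ℝ (ψ i))
    (h : EuclideanSpace ℝ (Fin dz) → EuclideanSpace ℝ (Fin dz))
    (hhφ : ∀ i z, φ i z = ∑ k, h z k • fderiv ℝ (φ i) z (EuclideanSpace.single k 1))
    (hhψ : ∀ i z, ψ i z = ∑ k, h z k • fderiv ℝ (ψ i) z (EuclideanSpace.single k 1))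
    (Q : EuclideanSpace ℝ (Fin dz) → ℝ)
    (hQ : ∀ z, Q z = (1 / (m : ℝ)) * ∑ i, (Qi i (φ i z) + Ri i (ψ i z)))
    (z : EuclideanSpace ℝ (Fin dz)) (hz : IsLocalMin Q z) :
    ∃ ε₀ > (0 : ℝ), ∀ ε : ℝ, 0 ≤ ε → ε < ε₀ →
      Q z = sInf {r : ℝ | ∃ (s : ℕ) (S : Fin s → EuclideanSpace ℝ (Fin dz))
          (α : Fin dz → Fin s → ℝ),
        (∀ j, ‖S j‖ ≤ 1 ∧ ∀ i, φ i (z + ε • S j) = φ i z ∧ ψ i (z + ε • S j) = ψ i z) ∧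
        r = (1 / (m : ℝ)) * ∑ i,
              (Qi i (∑ k, ∑ j, α k j •
                  fderiv ℝ (φ i) (z + ε • S j) (EuclideanSpace.single k 1)) +
               Ri i (∑ k, ∑ j, α k j •
                  fderiv ℝ (ψ i) (z + ε • S j) (EuclideanSpace.single k 1)))} := by
  obtain ⟨r, hr0, hball⟩ := Metric.eventually_nhds_iff.mp hz
  refine ⟨r, hr0, ?_⟩
  intro ε hε0 hεr
  set T := {r : ℝ | ∃ (s : ℕ) (S : Fin s → EuclideanSpace ℝ (Fin dz))
          (α : Fin dz → Fin s → ℝ),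
        (∀ j, ‖S j‖ ≤ 1 ∧ ∀ i, φ i (z + ε • S j) = φ i z ∧ ψ i (z + ε • S j) = ψ i z) ∧
        r = (1 / (m : ℝ)) * ∑ i,
              (Qi i (∑ k, ∑ j, α k j •
                  fderiv ℝ (φ i) (z + ε • S j) (EuclideanSpace.single k 1)) +
               Ri i (∑ k, ∑ j, α k j •
                  fderiv ℝ (ψ i) (z + ε • S j) (EuclideanSpace.single k 1)))} with hT
  -- membership of Q z
  have hmem : Q z ∈ T := by
    refine ⟨1, fun _ => 0, fun k _ => h z k, ?_, ?_⟩
    · intro j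
      refine ⟨by simp, fun i => ⟨by simp, by simp⟩⟩
    · rw [hQ z]
      simp only [smul_zero, add_zero, Fin.sum_univ_one]
      congr 1
      exact Finset.sum_congr rfl fun i _ => by rw [← hhφ i z, ← hhψ i z]
  -- lower bound
  have hlb : ∀ t ∈ T, Q z ≤ t := by
    rintro t ⟨s, S, α, hS, rfl⟩
    -- each perturbed point is a local min
    have hmin : ∀ j, IsLocalMin Q (z + ε • S j) := by
      intro j
      have hdist : dist (z + ε • S j) z ≤ ε := by
        rw [dist_eq_norm, add_sub_cancel_left, norm_smul, Real.norm_eq_abs,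
          abs_of_nonneg hε0]
        calc ε * ‖S j‖ ≤ ε * 1 := by
              exact mul_le_mul_of_nonneg_left (hS j).1 hε0
          _ = ε := mul_one ε
      have hQw : Q (z + ε • S j) = Q z := by
        rw [hQ, hQ z]
        congr 1
        exact Finset.sum_congr rfl fun i _ => by
          rw [((hS j).2 i).1, ((hS j).2 i).2]
      have : ∀ᶠ y in nhds (z + ε • S j), Q (z + ε • S j) ≤ Q y := by
        rw [Metric.eventually_nhds_iff]
        refine ⟨r - ε, by linarith, fun y hy => ?_⟩
        rw [hQw]
        apply hball
        calc dist y z ≤ dist y (z + ε • S j) + dist (z + ε • S j) z := dist_triangle _ _ _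
          _ < (r - ε) + ε := add_lt_add_of_lt_of_le hy hdist
          _ = r := by ring
      exact this
    -- criticality at perturbed points
    have critW : ∀ (j : Fin s) (u : EuclideanSpace ℝ (Fin dz)),
        ∑ i, (fderiv ℝ (Qi i) (φ i z) (fderiv ℝ (φ i) (z + ε • S j) u)
          + fderiv ℝ (Ri i) (ψ i z) (fderiv ℝ (ψ i) (z + ε • S j) u)) = 0 := by
      intro j u
      have hcrit := aux_crit hm Qi Ri φ ψ hQd hRd hφd hψd Q hQ _ (hmin j) u
      have e1 : ∀ i, φ i (z + ε • S j) = φ i z := fun i => ((hS j).2 i).1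
      have e2 : ∀ i, ψ i (z + ε • S j) = ψ i z := fun i => ((hS j).2 i).2
      simp only [e1, e2] at hcrit
      exact hcrit
    have crit0 : ∀ u : EuclideanSpace ℝ (Fin dz),
        ∑ i, (fderiv ℝ (Qi i) (φ i z) (fderiv ℝ (φ i) z u)
          + fderiv ℝ (Ri i) (ψ i z) (fderiv ℝ (ψ i) z u)) = 0 :=
      aux_crit hm Qi Ri φ ψ hQd hRd hφd hψd Q hQ z hz
    set A : Fin m → EuclideanSpace ℝ (Fin dphi) := fun i =>
      ∑ k, ∑ j, α k j • fderiv ℝ (φ i) (z + ε • S j) (EuclideanSpace.single k 1) with hA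
    set B : Fin m → EuclideanSpace ℝ (Fin dpsi) := fun i =>
      ∑ k, ∑ j, α k j • fderiv ℝ (ψ i) (z + ε • S j) (EuclideanSpace.single k 1) with hB
    set Dq : Fin m → EuclideanSpace ℝ (Fin dphi) →L[ℝ] ℝ :=
      fun i => fderiv ℝ (Qi i) (φ i z) with hDq
    set Dr : Fin m → EuclideanSpace ℝ (Fin dpsi) →L[ℝ] ℝ :=
      fun i => fderiv ℝ (Ri i) (ψ i z) with hDr
    have stepB : ∑ i, (Dq i (φ i z) + Dr i (ψ i z)) = 0 := by
      have e1 : ∀ i, Dq i (φ i z)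
          = ∑ k, h z k • Dq i (fderiv ℝ (φ i) z (EuclideanSpace.single k 1)) := by
        intro i
        conv_lhs => rw [hhφ i z]
        rw [map_sum]
        exact Finset.sum_congr rfl fun k _ => map_smul _ _ _
      have e2 : ∀ i, Dr i (ψ i z)
          = ∑ k, h z k • Dr i (fderiv ℝ (ψ i) z (EuclideanSpace.single k 1)) := by
        intro i
        conv_lhs => rw [hhψ i z]
        rw [map_sum]
        exact Finset.sum_congr rfl fun k _ => map_smul _ _ _
      simp only [e1, e2, ← Finset.sum_add_distrib]
      rw [Finset.sum_comm]
      apply Finset.sum_eq_zero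
      intro k _
      simp only [← smul_add]
      rw [← Finset.smul_sum, crit0 (EuclideanSpace.single k 1), smul_zero]
    have stepC : ∑ i, (Dq i (A i) + Dr i (B i)) = 0 := by
      have e1 : ∀ i, Dq i (A i) = ∑ k, ∑ j, α k j •
          Dq i (fderiv ℝ (φ i) (z + ε • S j) (EuclideanSpace.single k 1)) := by
        intro i
        rw [hA]
        simp only [map_sum, map_smul]
      have e2 : ∀ i, Dr i (B i) = ∑ k, ∑ j, α k j •
          Dr i (fderiv ℝ (ψ i) (z + ε • S j) (EuclideanSpace.single k 1)) := by
        intro i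
        rw [hB]
        simp only [map_sum, map_smul]
      simp only [e1, e2, ← Finset.sum_add_distrib]
      rw [Finset.sum_comm]
      apply Finset.sum_eq_zero
      intro k _
      rw [Finset.sum_comm]
      apply Finset.sum_eq_zero
      intro j _
      simp only [← smul_add]
      rw [← Finset.smul_sum, critW j (EuclideanSpace.single k 1), smul_zero]
    have h2 : ∑ i, ((Qi i (φ i z) + Dq i (A i - φ i z)) + (Ri i (ψ i z) + Dr i (B i - ψ i z)))
        ≤ ∑ i, (Qi i (A i) + Ri i (B i)) :=
      Finset.sum_le_sum fun i _ => add_le_add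
        (convex_fderiv_le (hQd i) (hQc i) (φ i z) (A i))
        (convex_fderiv_le (hRd i) (hRc i) (ψ i z) (B i))
    have h3 : ∑ i, ((Qi i (φ i z) + Dq i (A i - φ i z)) + (Ri i (ψ i z) + Dr i (B i - ψ i z)))
        = ∑ i, (Qi i (φ i z) + Ri i (ψ i z))
          + (∑ i, (Dq i (A i) + Dr i (B i)) - ∑ i, (Dq i (φ i z) + Dr i (ψ i z))) := by
      simp only [map_sub, Finset.sum_add_distrib, Finset.sum_sub_distrib]
      ring
    have key : ∑ i, (Qi i (φ i z) + Ri i (ψ i z)) ≤ ∑ i, (Qi i (A i) + Ri i (B i)) := by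
      rw [h3, stepB, stepC] at h2
      linarith
    rw [hQ z]
    exact mul_le_mul_of_nonneg_left key (by positivity)
  exact le_antisymm (le_csInf ⟨Q z, hmem⟩ hlb) (csInf_le ⟨Q z, hlb⟩ hmem)
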